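/- arXiv:1706.02630 — 3 statements merged into one kernel-verified Lean document; each statement's English description precedes it below -/
import Mathlib

section
/- Let C be a symmetric monoidal closed category with all small products. For families A : X → C, B : Y → C, D : Z → C of objects of C, there is a bijection between (i) pairs consisting of a function f₀ : X × Y → Z together with, for each x : X and y : Y, a morphism A x ⊗ B y ⟶ D (f₀ (x, y)) in C, and (ii) pairs consisting of a function g₀ : X → (Y → Z) together with, for each x : X, a morphism A x ⟶ ∏ y : Y, (B y ⊸ D (g₀ x y)) in C, where ⊸ denotes the internal hom of C and ∏ the categorical product. -/
open CategoryTheory CategoryTheory.Limits CategoryTheory.MonoidalCategory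

universe w v u

/-- Let `C` be a symmetric monoidal closed category with all small products.
For families `A : X → C`, `B : Y → C`, `D : Z → C`, there is a bijection
between (i) pairs of a function `f₀ : X × Y → Z` together with morphisms
`A x ⊗ B y ⟶ D (f₀ (x, y))`, and (ii) pairs of a function `g₀ : X → (Y → Z)`
together with morphisms `A x ⟶ ∏ y, (B y ⊸ D (g₀ x y))`. -/
theorem fam_tensor_hom_currying_bijection
    (C : Type u) [Category.{v} C] [MonoidalCategory C] [SymmetricCategory C]
    [MonoidalClosed C] [HasProducts.{w} C]
    {X Y Z : Type w} (A : X → C) (B : Y → C) (D : Z → C) :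
    Nonempty
      ((Σ f₀ : X × Y → Z, ∀ (x : X) (y : Y), (A x ⊗ B y ⟶ D (f₀ (x, y)))) ≃
       (Σ g₀ : X → Y → Z, ∀ x : X,
          (A x ⟶ ∏ᶜ fun y : Y => (ihom (B y)).obj (D (g₀ x y))))) := by
  refine ⟨{
    toFun := fun ⟨f₀, f⟩ => ⟨fun x y => f₀ (x, y), fun x =>
      Pi.lift fun y => MonoidalClosed.curry ((β_ (B y) (A x)).hom ≫ f x y)⟩
    invFun := fun ⟨g₀, g⟩ => ⟨fun p => g₀ p.1 p.2, fun x y =>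
      (β_ (A x) (B y)).hom ≫ MonoidalClosed.uncurry (g x ≫ Pi.π _ y)⟩
    left_inv := fun ⟨f₀, f⟩ => by
      refine Sigma.ext (funext fun p => rfl) ?_
      simp only [heq_eq_eq]
      funext x y
      simp [MonoidalClosed.uncurry_curry]
    right_inv := fun ⟨g₀, g⟩ => by
      refine Sigma.ext rfl ?_
      simp only [heq_eq_eq]
      funext x
      ext y
      simp [MonoidalClosed.curry_uncurry] }⟩
end

section
/- Let C be a monoidal category. The functor p : Type ⥤ Fam(C), sending X to (X, fun _ => 𝟙_C), has a right adjoint ♭ : Fam(C) ⥤ Type, sending (Y, B) to Σ y : Y, (𝟙_C ⟶ B y); that is, there is a bijection, natural in X and (Y, B), between morphisms p X ⟶ (Y, B) in Fam(C) and functions X → Σ y : Y, (𝟙_C ⟶ B y). -/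
open CategoryTheory CategoryTheory.Limits

universe w v u

/-- The category `Fam(C)` of families of objects of `C`: an object is a pair
`(X, A)` of a (index) type `X` and a family `A : X → C` of objects of `C`. -/
structure Fam (C : Type u) [CategoryTheory.Category.{v} C] : Type (max (w + 1) u) where
  /-- the index type -/
  idx : Type w
  /-- the family of fibers -/
  fib : idx → C

namespace Fam

variable {C : Type u} [CategoryTheory.Category.{v} C]

/-- A morphism `(X, A) ⟶ (Y, B)` in `Fam(C)` is a pair of a function
`f₀ : X → Y` together with morphisms `f x : A x ⟶ B (f₀ x)` of `C`. -/
instance : CategoryTheory.Category.{max w v} (Fam.{w} C) where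
  Hom A B := Σ f₀ : A.idx → B.idx, ∀ x, A.fib x ⟶ B.fib (f₀ x)
  id A := ⟨fun x => x, fun x => 𝟙 (A.fib x)⟩
  comp f g := ⟨fun x => g.1 (f.1 x), fun x => f.2 x ≫ g.2 (f.1 x)⟩
  id_comp f := congrArg (Sigma.mk f.1) (funext fun x => CategoryTheory.Category.id_comp (f.2 x))
  comp_id f := congrArg (Sigma.mk f.1) (funext fun x => CategoryTheory.Category.comp_id (f.2 x))
  assoc _ _ _ := congrArg (Sigma.mk _) (funext fun _ => CategoryTheory.Category.assoc _ _ _)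

end Fam

namespace Fam

open MonoidalCategory

variable (C : Type u) [Category.{v} C] [MonoidalCategory C]

/-- The functor `p : Type ⥤ Fam(C)` sending `X` to the constantly-unit family
`(X, fun _ => 𝟙_ C)`. -/
def p : Type v ⥤ Fam.{v} C where
  obj X := ⟨X, fun _ => 𝟙_ C⟩
  map f := ⟨f, fun _ => 𝟙 (𝟙_ C)⟩
  map_id _ := rfl
  map_comp _ _ := congrArg (Sigma.mk _) (funext fun _ => (Category.id_comp _).symm)

/-- The functor `♭ : Fam(C) ⥤ Type` sending `(Y, B)` to `Σ y : Y, (𝟙_C ⟶ B y)`. -/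
def flat : Fam.{v} C ⥤ Type v where
  obj A := Σ x : A.idx, (𝟙_ C ⟶ A.fib x)
  map f := TypeCat.ofHom fun s => ⟨f.1 s.1, s.2 ≫ f.2 s.1⟩
  map_id _ := congrArg TypeCat.ofHom <| funext fun s => congrArg (Sigma.mk s.1) (Category.comp_id s.2)
  map_comp _ _ := congrArg TypeCat.ofHom <| funext fun _ => congrArg (Sigma.mk _) (Category.assoc _ _ _).symm

end Fam

/-- For a monoidal category `C`, the functor `p : Type ⥤ Fam(C)`,
`X ↦ (X, fun _ => 𝟙_C)`, has as right adjoint the functor `♭ : Fam(C) ⥤ Type`,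
`(Y, B) ↦ Σ y : Y, (𝟙_C ⟶ B y)`: there is a bijection, natural in `X` and
`(Y, B)`, between morphisms `p X ⟶ (Y, B)` and functions `X → Σ y, (𝟙_C ⟶ B y)`. -/
theorem fam_p_adj_flat (C : Type u) [Category.{v} C] [MonoidalCategory C] :
    Nonempty (Fam.p C ⊣ Fam.flat C) := by
  refine ⟨Adjunction.mkOfHomEquiv
    { homEquiv := fun X A =>
        { toFun := fun f => TypeCat.ofHom fun x => (Sigma.mk (f.1 x) (f.2 x) : (Fam.flat C).obj A)
          invFun := fun g => ⟨fun x => Sigma.fst (g x), fun x => Sigma.snd (g x)⟩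
          left_inv := fun f => rfl
          right_inv := fun g => rfl }
      homEquiv_naturality_left_symm := fun f g =>
        congrArg (Sigma.mk _) (funext fun x => (Category.id_comp _).symm)
      homEquiv_naturality_right := fun f g => rfl }⟩
end

section
/- Let C be a symmetric monoidal closed category with all small products. For every object (Y, B) of Fam(C), the functor − ⊗ (Y, B) : Fam(C) ⥤ Fam(C) has a right adjoint, given on objects by (Z, D) ↦ (Y → Z, fun g => ∏ y : Y, (B y ⊸ D (g y))); hence Fam(C), with the tensor (X, A) ⊗ (Y, B) := (X × Y, fun (x, y) => A x ⊗ B y) and unit (PUnit, fun _ => 𝟙_C), is symmetric monoidal closed. -/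
open CategoryTheory CategoryTheory.Limits

universe w v u

namespace Fam

open MonoidalCategory

variable {C : Type u} [Category.{v} C] [MonoidalCategory C]

/-- The fiberwise tensor product on `Fam(C)`:
`(X, A) ⊗ (Y, B) := (X × Y, fun (x, y) => A x ⊗ B y)`. -/
def tensorObj' (A B : Fam.{w} C) : Fam.{w} C :=
  ⟨A.idx × B.idx, fun p => A.fib p.1 ⊗ B.fib p.2⟩

/-- The fiberwise tensor product of morphisms of `Fam(C)`. -/
def tensorHom' {A A' B B' : Fam.{w} C} (f : A ⟶ A') (g : B ⟶ B') :
    tensorObj' A B ⟶ tensorObj' A' B' :=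
  ⟨fun p => (f.1 p.1, g.1 p.2), fun p => f.2 p.1 ⊗ₘ g.2 p.2⟩

/-- The tensor unit of `Fam(C)`: `(PUnit, fun _ => 𝟙_C)`. -/
def unitObj : Fam.{w} C := ⟨PUnit, fun _ => 𝟙_ C⟩

/-- The associator of `Fam(C)`: the evident bijection of product types on
indices, and the associator of `C` on fibers. -/
def assocHom (A B D : Fam.{w} C) :
    tensorObj' (tensorObj' A B) D ⟶ tensorObj' A (tensorObj' B D) :=
  ⟨fun p => (p.1.1, (p.1.2, p.2)), fun _ => (α_ _ _ _).hom⟩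

/-- The left unitor of `Fam(C)`: the evident bijection on indices, and the
left unitor of `C` on fibers. -/
def leftUnitorHom (A : Fam.{w} C) : tensorObj' unitObj A ⟶ A :=
  ⟨fun p => p.2, fun _ => (λ_ _).hom⟩

/-- The right unitor of `Fam(C)`: the evident bijection on indices, and the
right unitor of `C` on fibers. -/
def rightUnitorHom (A : Fam.{w} C) : tensorObj' A unitObj ⟶ A :=
  ⟨fun p => p.1, fun _ => (ρ_ _).hom⟩

/-- The braiding of `Fam(C)`: the swap bijection of product types on indices,
and the braiding of `C` on fibers. -/
def braidHom [SymmetricCategory C] (A B : Fam.{w} C) :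
    tensorObj' A B ⟶ tensorObj' B A :=
  ⟨fun p => (p.2, p.1), fun _ => (β_ _ _).hom⟩

end Fam

namespace Fam

open MonoidalCategory

variable {C : Type u} [Category.{v} C] [MonoidalCategory C]

/-- The functor `− ⊗ (Y, B) : Fam(C) ⥤ Fam(C)` for the fiberwise tensor. -/
def tensorRight' (B : Fam.{w} C) : Fam.{w} C ⥤ Fam.{w} C where
  obj A := tensorObj' A B
  map f := tensorHom' f (𝟙 B)
  map_id A := congrArg (Sigma.mk _)
    (funext fun _ => MonoidalCategory.id_tensorHom_id _ _)
  map_comp f g := congrArg (Sigma.mk _)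
    (funext fun p => by
      show ((f.2 p.1 ≫ g.2 (f.1 p.1)) ⊗ₘ 𝟙 (B.fib p.2)) =
        (f.2 p.1 ⊗ₘ 𝟙 (B.fib p.2)) ≫ (g.2 (f.1 p.1) ⊗ₘ 𝟙 (B.fib p.2))
      rw [MonoidalCategory.tensorHom_comp_tensorHom, Category.comp_id])

@[simp]
theorem id_fst (A : Fam.{w} C) (x : A.idx) : (𝟙 A : A ⟶ A).1 x = x := rfl

@[simp]
theorem id_snd (A : Fam.{w} C) (x : A.idx) :
    (𝟙 A : A ⟶ A).2 x = 𝟙 (A.fib x) := rfl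

@[simp]
theorem comp_fst {A B D : Fam.{w} C} (f : A ⟶ B) (g : B ⟶ D) (x : A.idx) :
    (f ≫ g).1 x = g.1 (f.1 x) := rfl

@[simp]
theorem comp_snd {A B D : Fam.{w} C} (f : A ⟶ B) (g : B ⟶ D) (x : A.idx) :
    (f ≫ g).2 x = f.2 x ≫ g.2 (f.1 x) := rfl

variable [MonoidalClosed C] [HasProducts.{w} C]

/-- The candidate internal hom `(Y, B) ⊸ (Z, D)` in `Fam(C)`:
`(Y → Z, fun g => ∏ y : Y, (B y ⊸ D (g y)))`. -/
noncomputable def ihomObj (B D : Fam.{w} C) : Fam.{w} C :=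
  ⟨B.idx → D.idx, fun g => ∏ᶜ fun y => (ihom (B.fib y)).obj (D.fib (g y))⟩

/-- The functor `(Y, B) ⊸ − : Fam(C) ⥤ Fam(C)`. -/
noncomputable def ihomFunctor (B : Fam.{w} C) : Fam.{w} C ⥤ Fam.{w} C where
  obj D := ihomObj B D
  map h := ⟨fun g y => h.1 (g y),
    fun g => Limits.Pi.map fun y => (ihom (B.fib y)).map (h.2 (g y))⟩
  map_id D := congrArg (Sigma.mk _) (funext fun g => by
    ext j
    simp
    exact (Category.id_comp _).symm)
  map_comp h k := congrArg (Sigma.mk _) (funext fun g => by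
    ext j
    simp
    erw [Category.assoc, Limits.Pi.map_π, Limits.Pi.map_π_assoc])

end Fam

open MonoidalCategory in
/-- The assertion that a given monoidal structure on `Fam(C)` has the
fiberwise tensor and unit. -/
def FamMonoidalTensorSpec (C : Type u) [Category.{v} C] [MonoidalCategory C]
    [MonoidalCategory (Fam.{w} C)] : Prop :=
  (∀ A B : Fam.{w} C, A ⊗ B = Fam.tensorObj' A B) ∧
  (𝟙_ (Fam.{w} C) = Fam.unitObj)

namespace Fam

open MonoidalCategory MonoidalClosed

variable {C : Type u} [Category.{v} C] [MonoidalCategory C]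

/-- The fiberwise monoidal structure on `Fam(C)`. -/
def famMonoidal : MonoidalCategory (Fam.{w} C) where
  tensorObj := tensorObj'
  tensorHom := tensorHom'
  whiskerLeft A _ _ f := tensorHom' (𝟙 A) f
  whiskerRight f B := tensorHom' f (𝟙 B)
  tensorUnit := unitObj
  associator A B D :=
    ⟨assocHom A B D,
     ⟨fun p => ((p.1, p.2.1), p.2.2), fun _ => (α_ _ _ _).inv⟩,
     congrArg (Sigma.mk _) (funext fun _ => (α_ _ _ _).hom_inv_id),
     congrArg (Sigma.mk _) (funext fun _ => (α_ _ _ _).inv_hom_id)⟩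
  leftUnitor A :=
    ⟨leftUnitorHom A, ⟨fun x => (⟨⟩, x), fun _ => (λ_ _).inv⟩,
     congrArg (Sigma.mk _) (funext fun _ => (λ_ _).hom_inv_id),
     congrArg (Sigma.mk _) (funext fun _ => (λ_ _).inv_hom_id)⟩
  rightUnitor A :=
    ⟨rightUnitorHom A, ⟨fun x => (x, ⟨⟩), fun _ => (ρ_ _).inv⟩,
     congrArg (Sigma.mk _) (funext fun _ => (ρ_ _).hom_inv_id),
     congrArg (Sigma.mk _) (funext fun _ => (ρ_ _).inv_hom_id)⟩
  tensorHom_def f g := congrArg (Sigma.mk _) (funext fun p => by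
    show f.2 p.1 ⊗ₘ g.2 p.2 = (f.2 p.1 ⊗ₘ 𝟙 _) ≫ (𝟙 _ ⊗ₘ g.2 p.2)
    rw [MonoidalCategory.tensorHom_comp_tensorHom, Category.comp_id, Category.id_comp])
  id_tensorHom_id A B := congrArg (Sigma.mk _)
    (funext fun _ => MonoidalCategory.id_tensorHom_id _ _)
  tensorHom_comp_tensorHom f₁ f₂ g₁ g₂ := congrArg (Sigma.mk _)
    (funext fun _ => MonoidalCategory.tensorHom_comp_tensorHom _ _ _ _)
  whiskerLeft_id A B := congrArg (Sigma.mk _)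
    (funext fun _ => MonoidalCategory.id_tensorHom_id _ _)
  id_whiskerRight A B := congrArg (Sigma.mk _)
    (funext fun _ => MonoidalCategory.id_tensorHom_id _ _)
  associator_naturality f g h := congrArg (Sigma.mk _)
    (funext fun _ => MonoidalCategory.associator_naturality _ _ _)
  leftUnitor_naturality f := congrArg (Sigma.mk _) (funext fun x => by
    show (𝟙 _ ⊗ₘ f.2 _) ≫ (λ_ _).hom = (λ_ _).hom ≫ f.2 _
    simp)
  rightUnitor_naturality f := congrArg (Sigma.mk _) (funext fun x => by
    show (f.2 _ ⊗ₘ 𝟙 _) ≫ (ρ_ _).hom = (ρ_ _).hom ≫ f.2 _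
    simp)
  pentagon A B D E := congrArg (Sigma.mk _) (funext fun p => by
    show tensorHom (α_ _ _ _).hom (𝟙 (E.fib p.2)) ≫ (α_ _ _ _).hom ≫
        tensorHom (𝟙 (A.fib p.1.1.1)) (α_ _ _ _).hom =
      (α_ _ _ _).hom ≫ (α_ _ _ _).hom
    rw [tensorHom_id, id_tensorHom]
    exact MonoidalCategory.pentagon _ _ _ _)
  triangle A B := congrArg (Sigma.mk _) (funext fun p => by
    show (α_ _ _ _).hom ≫ tensorHom (𝟙 (A.fib p.1.1)) (λ_ (B.fib p.2)).hom =
      tensorHom (ρ_ (A.fib p.1.1)).hom (𝟙 (B.fib p.2))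
    rw [tensorHom_id, id_tensorHom]
    exact MonoidalCategory.triangle _ _)

attribute [local instance] famMonoidal

section Symm

variable [SymmetricCategory C]

/-- The fiberwise braided structure on `Fam(C)`. -/
def famBraided : BraidedCategory (Fam.{w} C) where
  braiding A B :=
    ⟨braidHom A B, braidHom B A,
     congrArg (Sigma.mk _) (funext fun _ => SymmetricCategory.symmetry _ _),
     congrArg (Sigma.mk _) (funext fun _ => SymmetricCategory.symmetry _ _)⟩
  braiding_naturality_right A _ _ f := congrArg (Sigma.mk _) (funext fun p => by
    show (𝟙 _ ⊗ₘ f.2 _) ≫ (β_ _ _).hom = (β_ _ _).hom ≫ (f.2 _ ⊗ₘ 𝟙 _)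
    simp)
  braiding_naturality_left f B := congrArg (Sigma.mk _) (funext fun p => by
    show (f.2 _ ⊗ₘ 𝟙 _) ≫ (β_ _ _).hom = (β_ _ _).hom ≫ (𝟙 _ ⊗ₘ f.2 _)
    simp)
  hexagon_forward A B D := congrArg (Sigma.mk _) (funext fun p => by
    show (α_ _ _ _).hom ≫ (β_ _ _).hom ≫ (α_ _ _ _).hom =
      tensorHom (β_ _ _).hom (𝟙 (D.fib p.2)) ≫ (α_ _ _ _).hom ≫
        tensorHom (𝟙 (B.fib p.1.2)) (β_ _ _).hom
    simpa using BraidedCategory.hexagon_forward _ _ _)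
  hexagon_reverse A B D := congrArg (Sigma.mk _) (funext fun p => by
    show (α_ _ _ _).inv ≫ (β_ _ _).hom ≫ (α_ _ _ _).inv =
      tensorHom (𝟙 (A.fib p.1)) (β_ _ _).hom ≫ (α_ _ _ _).inv ≫
        tensorHom (β_ _ _).hom (𝟙 (B.fib p.2.1))
    simpa using BraidedCategory.hexagon_reverse _ _ _)

attribute [local instance] famBraided

/-- The fiberwise symmetric structure on `Fam(C)`. -/
def famSymmetric : SymmetricCategory (Fam.{w} C) where
  symmetry A B := congrArg (Sigma.mk _) (funext fun p => by
    show (β_ _ _).hom ≫ (β_ _ _).hom = 𝟙 _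
    simp)

variable [MonoidalClosed C] [HasProducts.{w} C]

/-- The adjunction `− ⊗ B ⊣ (B ⊸ −)` in `Fam(C)`. -/
noncomputable def famAdj (B : Fam.{w} C) :
    tensorRight' B ⊣ ihomFunctor B :=
  Adjunction.mkOfHomEquiv
    { homEquiv := fun A D =>
        { toFun := fun f => ⟨fun x y => f.1 (x, y),
            fun x => Pi.lift fun y => curry ((β_ _ _).hom ≫ f.2 (x, y))⟩
          invFun := fun g => ⟨fun p => g.1 p.1 p.2,
            fun p => (β_ _ _).hom ≫ uncurry (g.2 p.1 ≫ Pi.π _ p.2)⟩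
          left_inv := fun f => by
            obtain ⟨f₀, f⟩ := f
            refine congrArg (Sigma.mk _) (funext fun p => ?_)
            dsimp only
            erw [Pi.lift_π, uncurry_curry, SymmetricCategory.symmetry_assoc]
            rfl
          right_inv := fun g => by
            obtain ⟨g₀, g⟩ := g
            refine congrArg (Sigma.mk _) (funext fun x => ?_)
            ext y
            simp
            erw [SymmetricCategory.symmetry_assoc, curry_uncurry]
            rfl }
      homEquiv_naturality_left_symm := fun f g =>
        congrArg (Sigma.mk _) (funext fun p => by
          show (β_ _ _).hom ≫ uncurry ((f.2 p.1 ≫ g.2 (f.1 p.1)) ≫ Pi.π _ p.2) =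
            (f.2 p.1 ⊗ₘ 𝟙 _) ≫ (β_ _ _).hom ≫ uncurry (g.2 (f.1 p.1) ≫ Pi.π _ p.2)
          erw [Category.assoc, uncurry_natural_left, ← Category.assoc, ← Category.assoc,
            tensorHom_id, BraidedCategory.braiding_naturality_left_assoc]
          simp only [Category.assoc]
          rfl)
      homEquiv_naturality_right := fun f g =>
        congrArg (Sigma.mk _) (funext fun x => by
          ext y
          simp [ihomFunctor, curry_natural_right]
          erw [Category.assoc, Limits.Pi.map_π, Pi.lift_π_assoc, ← curry_natural_right, Category.assoc]
          rfl) }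

/-- `tensorRight' A` is isomorphic to `tensorLeft A` via the braiding. -/
def tensorRight'IsoTensorLeft (A : Fam.{w} C) :
    tensorRight' A ≅ tensorLeft A :=
  NatIso.ofComponents
    (fun B =>
      ⟨braidHom B A, braidHom A B,
       congrArg (Sigma.mk _) (funext fun _ => SymmetricCategory.symmetry _ _),
       congrArg (Sigma.mk _) (funext fun _ => SymmetricCategory.symmetry _ _)⟩)
    (fun f => congrArg (Sigma.mk _) (funext fun p => by
      show (f.2 _ ⊗ₘ 𝟙 _) ≫ (β_ _ _).hom = (β_ _ _).hom ≫ (𝟙 _ ⊗ₘ f.2 _)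
      simp))

/-- `Fam(C)` is monoidal closed. -/
noncomputable def famClosed : MonoidalClosed (Fam.{w} C) where
  closed A :=
    { rightAdj := ihomFunctor A
      adj := (famAdj A).ofNatIsoLeft (tensorRight'IsoTensorLeft A) }

end Symm

end Fam

/-- Let `C` be a symmetric monoidal closed category with all small products.
For every object `(Y, B)` of `Fam(C)`, the functor `− ⊗ (Y, B)` has a right
adjoint, given on objects by `(Z, D) ↦ (Y → Z, fun g => ∏ y, (B y ⊸ D (g y)))`;
hence `Fam(C)`, with the fiberwise tensor and unit `(PUnit, fun _ => 𝟙_C)`, is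
symmetric monoidal closed. -/
theorem fam_monoidalClosed (C : Type u) [Category.{v} C] [MonoidalCategory C]
    [SymmetricCategory C] [MonoidalClosed C] [HasProducts.{w} C] :
    (∀ B : Fam.{w} C, Nonempty (Fam.tensorRight' B ⊣ Fam.ihomFunctor B)) ∧
    ∃ (M : MonoidalCategory (Fam.{w} C)) (_ : @SymmetricCategory _ _ M)
      (_ : @MonoidalClosed _ _ M), @FamMonoidalTensorSpec C _ _ M := by
  exact ⟨fun B => ⟨Fam.famAdj B⟩,
    Fam.famMonoidal, Fam.famSymmetric, Fam.famClosed, fun A B => rfl, rfl⟩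
end
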